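/- Let n≥1 and let T_n(t)=Σ_{k=−n}^{n} c_k e^{ikt} be a trigonometric polynomial of degree at most n with complex coefficients c_k. Then for all 0<p<q≤∞, with m_p the unique positive integer in [p/2, 1+p/2): ‖T_n‖_{L^q[0,2π]} ≤ ( (2m_p·n+1)/(2π) )^{1/p−1/q} · ‖T_n‖_{L^p[0,2π]}. -/

import Mathlib

open Complex MeasureTheory Polynomial Real Set


lemma expInt (m : ℤ) : ∫ t in (0:ℝ)..(2*Real.pi), Complex.exp (m * t * Complex.I)
    = if m = 0 then (2*Real.pi : ℂ) else 0 := by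
  rcases eq_or_ne m 0 with h | h
  · simp [h]
  · have hc : (m : ℂ) * Complex.I ≠ 0 := by
      simp [Complex.I_ne_zero, Int.cast_injective.ne_iff, h]
    have : ∀ t : ℝ, (m : ℂ) * t * Complex.I = ((m : ℂ) * Complex.I) * t := by
      intro t; ring
    simp only [this]
    rw [integral_exp_mul_complex hc]
    have h1 : Complex.exp ((m : ℂ) * Complex.I * (2*Real.pi)) = 1 := by
      rw [show (m : ℂ) * Complex.I * (2*Real.pi) = m * (2*Real.pi*Complex.I) by push_cast; ring]
      exact Complex.exp_int_mul_two_pi_mul_I m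
    simp [h, h1]

def IsTrig (N : ℕ) (f : ℝ → ℂ) : Prop :=
  ∃ e : ℤ → ℂ, (∀ k : ℤ, k ∉ Finset.Icc (-(N:ℤ)) N → e k = 0) ∧
    ∀ t, f t = ∑ k ∈ Finset.Icc (-(N:ℤ)) N, e k * Complex.exp (k * t * Complex.I)

lemma expAdd (k l : ℤ) (t : ℝ) :
    Complex.exp (k * t * Complex.I) * Complex.exp (l * t * Complex.I)
      = Complex.exp ((k + l : ℤ) * t * Complex.I) := by
  rw [← Complex.exp_add]; push_cast; ring_nf

lemma IsTrig.mul {N M : ℕ} {f g : ℝ → ℂ} (hf : IsTrig N f) (hg : IsTrig M g) :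
    IsTrig (N + M) (fun t => f t * g t) := by
  obtain ⟨a, ha, hfa⟩ := hf
  obtain ⟨b, hb, hgb⟩ := hg
  refine ⟨fun j => ∑ k ∈ Finset.Icc (-(N:ℤ)) N, a k * b (j - k), ?_, ?_⟩
  · intro j hj
    apply Finset.sum_eq_zero
    intro k hk
    rw [hb (j - k) ?_, mul_zero]
    simp only [Finset.mem_Icc, not_and_or, not_le] at hj hk ⊢
    push_cast at hj hk ⊢
    omega
  · intro t
    simp only [hfa, hgb, Finset.sum_mul, Finset.mul_sum]
    conv_lhs => rw [Finset.sum_comm]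
    conv_rhs => rw [Finset.sum_comm]
    refine Finset.sum_congr rfl (fun i hi => ?_)
    calc (∑ x ∈ Finset.Icc (-(M:ℤ)) M,
            a i * Complex.exp (i * t * Complex.I) * (b x * Complex.exp (x * t * Complex.I)))
        = ∑ x ∈ Finset.Icc (-(M:ℤ)) M,
            a i * b ((i + x) - i) * Complex.exp ((i + x : ℤ) * t * Complex.I) := by
          refine Finset.sum_congr rfl (fun x _ => ?_)
          rw [← expAdd, add_sub_cancel_left]; ring
      _ = ∑ j ∈ (Finset.Icc (-(M:ℤ)) M).map (addLeftEmbedding i),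
            a i * b (j - i) * Complex.exp (j * t * Complex.I) := by
          rw [Finset.sum_map]
          simp [addLeftEmbedding_apply]
      _ = ∑ j ∈ Finset.Icc (i + -(M:ℤ)) (i + M),
            a i * b (j - i) * Complex.exp (j * t * Complex.I) := by
          rw [Finset.map_add_left_Icc]
      _ = ∑ j ∈ Finset.Icc (-((N:ℤ) + M)) (N + M),
            a i * b (j - i) * Complex.exp (j * t * Complex.I) := by
          apply Finset.sum_subset
          · intro j hj
            simp only [Finset.mem_Icc] at hi hj ⊢
            omega
          · intro j hj hj2
            rw [hb (j - i) ?_, mul_zero, zero_mul]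
            simp only [Finset.mem_Icc, not_and_or, not_le] at hj2 ⊢
            omega
      _ = ∑ j ∈ Finset.Icc (-((N + M : ℕ) : ℤ)) ((N + M : ℕ) : ℤ),
            a i * b (j - i) * Complex.exp (j * t * Complex.I) := by
          push_cast; rfl

lemma IsTrig.pow {N : ℕ} {f : ℝ → ℂ} (hf : IsTrig N f) :
    ∀ m : ℕ, IsTrig ((m+1) * N) (fun t => f t ^ (m+1)) := by
  intro m
  induction m with
  | zero => simpa using hf
  | succ m ih =>
      have := ih.mul hf
      have hdeg : (m+1) * N + N = (m+2) * N := by ring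
      rw [hdeg] at this
      simpa [pow_succ] using this

lemma supBound {N : ℕ} (e : ℤ → ℂ) (t : ℝ) :
    ‖∑ k ∈ Finset.Icc (-(N:ℤ)) N, e k * Complex.exp (k * t * Complex.I)‖
      ≤ ∑ k ∈ Finset.Icc (-(N:ℤ)) N, ‖e k‖ := by
  refine le_trans (norm_sum_le _ _) (Finset.sum_le_sum fun k _ => ?_)
  rw [norm_mul]
  have h1 : ‖Complex.exp ((k:ℂ) * t * Complex.I)‖ = 1 := by
    rw [Complex.norm_exp]
    simp
  rw [h1, mul_one]

lemma parseval {N : ℕ} (e : ℤ → ℂ) :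
    ∫ t in (0:ℝ)..(2*Real.pi),
        ‖∑ k ∈ Finset.Icc (-(N:ℤ)) N, e k * Complex.exp (k * t * Complex.I)‖^2
      = 2*Real.pi * ∑ k ∈ Finset.Icc (-(N:ℤ)) N, ‖e k‖^2 := by
  set A := Finset.Icc (-(N:ℤ)) N with hA
  set S : ℝ → ℂ := fun t => ∑ k ∈ A, e k * Complex.exp (k*t*Complex.I) with hS
  have hScont : Continuous S := by
    apply continuous_finset_sum
    intro k _
    exact continuous_const.mul (Complex.continuous_exp.comp (by fun_prop))
  have hexpand : ∀ t : ℝ, S t * (starRingEnd ℂ) (S t)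
      = ∑ k ∈ A, ∑ l ∈ A, (e k * (starRingEnd ℂ) (e l))
          * Complex.exp (((k - l : ℤ)) * t * Complex.I) := by
    intro t
    rw [hS]
    simp only [map_sum, Finset.sum_mul_sum, map_mul]
    refine Finset.sum_congr rfl fun k _ => Finset.sum_congr rfl fun l _ => ?_
    have hc : (starRingEnd ℂ) (Complex.exp ((l:ℂ)*t*Complex.I))
        = Complex.exp (((-l : ℤ):ℂ)*t*Complex.I) := by
      rw [← Complex.exp_conj]
      congr 1
      simp [Complex.conj_I]
    rw [hc, show (e k * Complex.exp ((k:ℂ)*t*Complex.I)) * ((starRingEnd ℂ) (e l) * Complex.exp (((-l : ℤ):ℂ)*t*Complex.I)) = (e k * (starRingEnd ℂ) (e l)) * (Complex.exp ((k:ℂ)*t*Complex.I) * Complex.exp (((-l : ℤ):ℂ)*t*Complex.I)) by ring, expAdd]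
    rw [sub_eq_add_neg]
  have hint : (∫ t in (0:ℝ)..(2*Real.pi), S t * (starRingEnd ℂ) (S t))
      = 2*Real.pi * ∑ k ∈ A, (e k * (starRingEnd ℂ) (e k)) := by
    have h1 : (∫ t in (0:ℝ)..(2*Real.pi), S t * (starRingEnd ℂ) (S t))
        = ∑ k ∈ A, ∑ l ∈ A, (e k * (starRingEnd ℂ) (e l))
            * ∫ t in (0:ℝ)..(2*Real.pi), Complex.exp (((k - l : ℤ)) * t * Complex.I) := by
      rw [intervalIntegral.integral_congr (g := fun t => ∑ k ∈ A, ∑ l ∈ A,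
            (e k * (starRingEnd ℂ) (e l)) * Complex.exp (((k - l : ℤ)) * t * Complex.I))
          (fun t _ => hexpand t)]
      rw [intervalIntegral.integral_finset_sum]
      · refine Finset.sum_congr rfl fun k _ => ?_
        rw [intervalIntegral.integral_finset_sum]
        · exact Finset.sum_congr rfl fun l _ => intervalIntegral.integral_const_mul _ _
        · intro l _
          apply Continuous.intervalIntegrable
          exact continuous_const.mul (Complex.continuous_exp.comp (by fun_prop))
      · intro k _
        apply Continuous.intervalIntegrable
        apply continuous_finset_sum
        intro l _
        exact continuous_const.mul (Complex.continuous_exp.comp (by fun_prop))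
    rw [h1]
    have h2 : ∀ k ∈ A, (∑ l ∈ A, (e k * (starRingEnd ℂ) (e l))
        * ∫ t in (0:ℝ)..(2*Real.pi), Complex.exp (((k - l : ℤ)) * t * Complex.I))
        = 2*Real.pi * (e k * (starRingEnd ℂ) (e k)) := by
      intro k hk
      rw [Finset.sum_eq_single_of_mem k hk]
      · rw [expInt (k-k), if_pos (sub_self k)]; ring
      · intro l _ hlk
        have hkl : k - l ≠ 0 := sub_ne_zero_of_ne (Ne.symm hlk)
        rw [expInt (k-l), if_neg hkl, mul_zero]
    rw [Finset.sum_congr rfl h2, ← Finset.mul_sum]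
  -- take real parts
  have h2pi : (0:ℝ) ≤ 2*Real.pi := by positivity
  have hre : ∀ t : ℝ, ‖S t‖^2 = (S t * (starRingEnd ℂ) (S t)).re := by
    intro t
    rw [Complex.mul_conj]
    simp only [Complex.normSq_eq_norm_sq, ← Complex.ofReal_pow, Complex.ofReal_re]
  calc (∫ t in (0:ℝ)..(2*Real.pi), ‖S t‖^2)
      = ∫ t in (0:ℝ)..(2*Real.pi), (S t * (starRingEnd ℂ) (S t)).re := by
        exact intervalIntegral.integral_congr fun t _ => hre t
    _ = (∫ t in (0:ℝ)..(2*Real.pi), S t * (starRingEnd ℂ) (S t)).re := by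
        rw [intervalIntegral.integral_of_le h2pi, intervalIntegral.integral_of_le h2pi]
        exact integral_re ((hScont.mul (continuous_star.comp hScont)).integrableOn_Ioc)
    _ = 2*Real.pi * ∑ k ∈ A, ‖e k‖^2 := by
        rw [hint]
        simp only [Complex.mul_conj]
        rw [show (∑ k ∈ A, ((Complex.normSq (e k) : ℝ) : ℂ))
            = ((∑ k ∈ A, Complex.normSq (e k) : ℝ) : ℂ) from (Complex.ofReal_sum A _).symm]
        simp [Complex.normSq_eq_norm_sq, Finset.mul_sum, ← Complex.ofReal_pow]

lemma core {N : ℕ} {f : ℝ → ℂ} (hf : IsTrig N f) (t : ℝ) :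
    2*Real.pi * ‖f t‖^2 ≤ (2*(N:ℝ)+1) * ∫ s in (0:ℝ)..(2*Real.pi), ‖f s‖^2 := by
  obtain ⟨e, -, hfe⟩ := hf
  have hI : (∫ s in (0:ℝ)..(2*Real.pi), ‖f s‖^2)
      = 2*Real.pi * ∑ k ∈ Finset.Icc (-(N:ℤ)) N, ‖e k‖^2 := by
    rw [intervalIntegral.integral_congr (g := fun s =>
      ‖∑ k ∈ Finset.Icc (-(N:ℤ)) N, e k * Complex.exp (k*s*Complex.I)‖^2)
      (fun s _ => by rw [hfe s])]
    exact parseval e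
  have h1 : ‖f t‖ ≤ ∑ k ∈ Finset.Icc (-(N:ℤ)) N, ‖e k‖ := by
    rw [hfe t]; exact supBound e t
  have hcard : ((Finset.Icc (-(N:ℤ)) N).card : ℝ) = 2*(N:ℝ)+1 := by
    rw [Int.card_Icc]
    rw [show (N:ℤ)+1 - -(N:ℤ) = ((2*N+1 : ℕ) : ℤ) by push_cast; ring, Int.toNat_natCast]
    push_cast; ring
  have h2 : (∑ k ∈ Finset.Icc (-(N:ℤ)) N, ‖e k‖)^2
      ≤ (2*(N:ℝ)+1) * ∑ k ∈ Finset.Icc (-(N:ℤ)) N, ‖e k‖^2 := by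
    have := sq_sum_le_card_mul_sum_sq (s := Finset.Icc (-(N:ℤ)) N)
      (f := fun k => ‖e k‖) (α := ℝ)
    rwa [hcard] at this
  calc 2*Real.pi * ‖f t‖^2
      ≤ 2*Real.pi * (∑ k ∈ Finset.Icc (-(N:ℤ)) N, ‖e k‖)^2 := by
        have := pow_le_pow_left₀ (norm_nonneg (f t)) h1 2
        nlinarith [Real.pi_pos]
    _ ≤ 2*Real.pi * ((2*(N:ℝ)+1) * ∑ k ∈ Finset.Icc (-(N:ℤ)) N, ‖e k‖^2) := by
        have := Real.pi_pos; nlinarith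
    _ = (2*(N:ℝ)+1) * ∫ s in (0:ℝ)..(2*Real.pi), ‖f s‖^2 := by rw [hI]; ring

noncomputable section

def trigLp (f : ℝ → ℂ) (p : ℝ) : ℝ :=
  (∫ t in (0:ℝ)..(2 * Real.pi), ‖f t‖ ^ p) ^ (1/p)

def trigSup (f : ℝ → ℂ) : ℝ :=
  sSup ((fun t => ‖f t‖) '' Set.Icc (0:ℝ) (2 * Real.pi))

theorem stmt9
    (n : ℕ) (hn : 1 ≤ n) (c : ℤ → ℂ)
    (T : ℝ → ℂ) (hT : ∀ t, T t = ∑ k ∈ Finset.Icc (-(n:ℤ)) (n:ℤ), c k * Complex.exp (k * t * Complex.I))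
    (p : ℝ) (hp : 0 < p)
    (mp : ℕ) (hmp0 : 1 ≤ mp) (hmp1 : p / 2 ≤ (mp : ℝ)) (hmp2 : (mp : ℝ) < 1 + p / 2) :
    (∀ q : ℝ, p < q → trigLp T q ≤
        ((2 * (mp : ℝ) * n + 1) / (2 * Real.pi)) ^ (1/p - 1/q) * trigLp T p) ∧
      trigSup T ≤ ((2 * (mp : ℝ) * n + 1) / (2 * Real.pi)) ^ (1/p) * trigLp T p := by
  have hπ : (0:ℝ) < Real.pi := Real.pi_pos
  have hmpp : (1:ℝ) ≤ (mp:ℝ) := by exact_mod_cast hmp0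
  have h2π : (0:ℝ) < 2*Real.pi := by linarith
  set C0 : ℝ := (2 * (mp : ℝ) * n + 1) / (2 * Real.pi) with hC0
  have hC0pos : 0 < C0 := by positivity
  -- T is a trig polynomial and continuous
  have hTtrig : IsTrig n T := by
    refine ⟨fun k => if k ∈ Finset.Icc (-(n:ℤ)) n then c k else 0, ?_, ?_⟩
    · intro k hk; simp [hk]
    · intro t; rw [hT t]; exact Finset.sum_congr rfl fun k hk => by simp [hk]
  have hTc : Continuous T := by
    have h : Continuous fun t : ℝ =>
        ∑ k ∈ Finset.Icc (-(n:ℤ)) n, c k * Complex.exp (k*t*Complex.I) := by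
      apply continuous_finset_sum; intro k _
      exact continuous_const.mul (Complex.continuous_exp.comp (by fun_prop))
    exact h.congr fun t => (hT t).symm
  -- sup is attained
  set M := trigSup T with hM
  have hKc : IsCompact ((fun t => ‖T t‖) '' Set.Icc (0:ℝ) (2*Real.pi)) :=
    isCompact_Icc.image hTc.norm
  have hKne : ((fun t => ‖T t‖) '' Set.Icc (0:ℝ) (2*Real.pi)).Nonempty :=
    (Set.nonempty_Icc.2 h2π.le).image _
  have hMmem : M ∈ (fun t => ‖T t‖) '' Set.Icc (0:ℝ) (2*Real.pi) :=
    hKc.sSup_mem hKne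
  obtain ⟨t0, ht0K, ht0⟩ := hMmem
  have hub : ∀ t ∈ Set.Icc (0:ℝ) (2*Real.pi), ‖T t‖ ≤ M := fun t ht =>
    le_csSup hKc.bddAbove (Set.mem_image_of_mem _ ht)
  have hM0 : 0 ≤ M := ht0 ▸ norm_nonneg _
  -- T^mp is a trig polynomial of degree mp*n
  obtain ⟨m', hm'⟩ : ∃ m', mp = m' + 1 := ⟨mp - 1, by omega⟩
  have hSpow : IsTrig (mp * n) (fun t => T t ^ mp) := by
    have h := hTtrig.pow m'; rwa [← hm'] at h
  -- core estimate at the max point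
  have hcore : 2*Real.pi * M^(mp*2) ≤ (2*(mp:ℝ)*n+1) * ∫ s in (0:ℝ)..(2*Real.pi), ‖T s‖^(mp*2) := by
    have h := core hSpow t0
    simp only [norm_pow, ← pow_mul] at h
    rw [← ht0]
    calc 2*Real.pi * ‖T t0‖^(mp*2) ≤ (2*((mp*n : ℕ):ℝ)+1) * ∫ s in (0:ℝ)..(2*Real.pi), ‖T s‖^(mp*2) := h
      _ = (2*(mp:ℝ)*n+1) * ∫ s in (0:ℝ)..(2*Real.pi), ‖T s‖^(mp*2) := by push_cast; ring
  set Ip := ∫ s in (0:ℝ)..(2*Real.pi), ‖T s‖^p with hIp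
  have hIpnn : 0 ≤ Ip := intervalIntegral.integral_nonneg h2π.le
    (fun s _ => Real.rpow_nonneg (norm_nonneg _) p)
  have hcontr : ∀ r : ℝ, 0 < r → Continuous (fun s => ‖T s‖ ^ r) := fun r hr =>
    hTc.norm.rpow_const (fun x => Or.inr hr.le)
  have hp' : p ≠ 0 := hp.ne'
  have hple : p ≤ 2*(mp:ℝ) := by linarith
  -- bridge: ∫ ‖T‖^(2mp) ≤ M^(2mp - p) * Ip
  have hbridge : (∫ s in (0:ℝ)..(2*Real.pi), ‖T s‖^(mp*2))
      ≤ M^(2*(mp:ℝ) - p) * Ip := by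
    have hpt : ∀ s ∈ Set.Icc (0:ℝ) (2*Real.pi),
        ‖T s‖^(mp*2) ≤ M^(2*(mp:ℝ) - p) * ‖T s‖^p := by
      intro s hs
      have hx0 : (0:ℝ) ≤ ‖T s‖ := norm_nonneg _
      have h1 : (‖T s‖^(mp*2) : ℝ) = ‖T s‖ ^ ((2*(mp:ℝ) - p) + p) := by
        rw [← Real.rpow_natCast (‖T s‖) (mp*2)]
        congr 1; push_cast; ring
      rw [h1, Real.rpow_add' hx0 (by rw [sub_add_cancel]; exact ne_of_gt (by linarith))]
      exact mul_le_mul_of_nonneg_right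
        (Real.rpow_le_rpow hx0 (hub s hs) (by linarith))
        (Real.rpow_nonneg hx0 p)
    calc (∫ s in (0:ℝ)..(2*Real.pi), ‖T s‖^(mp*2))
        ≤ ∫ s in (0:ℝ)..(2*Real.pi), M^(2*(mp:ℝ) - p) * ‖T s‖^p := by
          apply intervalIntegral.integral_mono_on h2π.le
          · exact (hTc.norm.pow _).intervalIntegrable _ _
          · exact (continuous_const.mul (hcontr p hp)).intervalIntegrable _ _
          · exact hpt
      _ = M^(2*(mp:ℝ) - p) * Ip := intervalIntegral.integral_const_mul _ _
  -- key: M^p ≤ C0 * Ip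
  have hkey : M ^ p ≤ C0 * Ip := by
    rcases eq_or_lt_of_le hM0 with hM0' | hMpos
    · rw [← hM0', Real.zero_rpow hp']
      positivity
    · have h1 : 2*Real.pi * (M^(2*(mp:ℝ) - p) * M^p) ≤ (2*(mp:ℝ)*n+1) * (M^(2*(mp:ℝ) - p) * Ip) := by
        have hMnat : (M^(mp*2) : ℝ) = M^(2*(mp:ℝ) - p) * M^p := by
          rw [← Real.rpow_add hMpos, ← Real.rpow_natCast M (mp*2)]
          congr 1; push_cast; ring
        calc 2*Real.pi * (M^(2*(mp:ℝ) - p) * M^p) = 2*Real.pi * M^(mp*2) := by rw [hMnat]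
          _ ≤ (2*(mp:ℝ)*n+1) * ∫ s in (0:ℝ)..(2*Real.pi), ‖T s‖^(mp*2) := hcore
          _ ≤ (2*(mp:ℝ)*n+1) * (M^(2*(mp:ℝ) - p) * Ip) := by
              have hc1 : (0:ℝ) ≤ 2*(mp:ℝ)*n+1 := by positivity
              exact mul_le_mul_of_nonneg_left hbridge hc1
      have hMe : 0 < M^(2*(mp:ℝ) - p) := Real.rpow_pos_of_pos hMpos _
      rw [hC0, div_mul_eq_mul_div, le_div_iff₀ h2π]
      calc M^p * (2*Real.pi) = (2*Real.pi * (M^(2*(mp:ℝ) - p) * M^p)) / M^(2*(mp:ℝ) - p) := by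
            field_simp
        _ ≤ ((2*(mp:ℝ)*n+1) * (M^(2*(mp:ℝ) - p) * Ip)) / M^(2*(mp:ℝ) - p) := by
            exact div_le_div_of_nonneg_right h1 hMe.le
        _ = (2*(mp:ℝ)*n+1) * Ip := by field_simp
  -- sup bound
  have hMbound : M ≤ C0^(1/p) * Ip^(1/p) := by
    calc M = (M^p)^(1/p) := by
          rw [← Real.rpow_mul hM0, mul_one_div, div_self hp', Real.rpow_one]
      _ ≤ (C0 * Ip)^(1/p) := Real.rpow_le_rpow (Real.rpow_nonneg hM0 p) hkey (by positivity)
      _ = C0^(1/p) * Ip^(1/p) := Real.mul_rpow hC0pos.le hIpnn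
  constructor
  · -- Lq bound
    intro q hq
    have hq0 : 0 < q := hp.trans hq
    have hq' : q ≠ 0 := hq0.ne'
    set Iq := ∫ s in (0:ℝ)..(2*Real.pi), ‖T s‖^q with hIq
    have hIqnn : 0 ≤ Iq := intervalIntegral.integral_nonneg h2π.le
      (fun s _ => Real.rpow_nonneg (norm_nonneg _) q)
    have hbridgeq : Iq ≤ M^(q - p) * Ip := by
      have hpt : ∀ s ∈ Set.Icc (0:ℝ) (2*Real.pi),
          ‖T s‖^q ≤ M^(q - p) * ‖T s‖^p := by
        intro s hs
        have hx0 : (0:ℝ) ≤ ‖T s‖ := norm_nonneg _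
        conv_lhs => rw [show q = (q - p) + p by ring]
        rw [Real.rpow_add' hx0 (by rw [sub_add_cancel]; exact hq')]
        exact mul_le_mul_of_nonneg_right
          (Real.rpow_le_rpow hx0 (hub s hs) (by linarith))
          (Real.rpow_nonneg hx0 p)
      calc Iq ≤ ∫ s in (0:ℝ)..(2*Real.pi), M^(q - p) * ‖T s‖^p := by
            apply intervalIntegral.integral_mono_on h2π.le
            · exact (hcontr q hq0).intervalIntegrable _ _
            · exact (continuous_const.mul (hcontr p hp)).intervalIntegrable _ _
            · exact hpt
        _ = M^(q - p) * Ip := intervalIntegral.integral_const_mul _ _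
    have hqp0 : (0:ℝ) ≤ q - p := by linarith
    have step1 : trigLp T q ≤ (M^(q-p) * Ip)^(1/q) := by
      rw [trigLp]
      exact Real.rpow_le_rpow hIqnn hbridgeq (by positivity)
    have step2 : M^(q-p) ≤ C0^((q-p)/p) * Ip^((q-p)/p) := by
      calc M^(q-p) ≤ (C0^(1/p) * Ip^(1/p))^(q-p) :=
            Real.rpow_le_rpow hM0 hMbound hqp0
        _ = C0^((q-p)/p) * Ip^((q-p)/p) := by
            rw [Real.mul_rpow (Real.rpow_nonneg hC0pos.le _) (Real.rpow_nonneg hIpnn _),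
              ← Real.rpow_mul hC0pos.le, ← Real.rpow_mul hIpnn]
            congr 1 <;> · congr 1; field_simp
    calc trigLp T q ≤ (M^(q-p) * Ip)^(1/q) := step1
      _ ≤ ((C0^((q-p)/p) * Ip^((q-p)/p)) * Ip)^(1/q) := by
          apply Real.rpow_le_rpow (by positivity)
            (mul_le_mul_of_nonneg_right step2 hIpnn) (by positivity)
      _ = C0^(1/p - 1/q) * trigLp T p := by
          rw [trigLp, ← hIp, mul_assoc,
            show Ip^((q-p)/p) * Ip = Ip^((q-p)/p + 1) by
              have h9 : (q-p)/p + 1 ≠ 0 :=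
                ne_of_gt (by have : 0 ≤ (q-p)/p := div_nonneg hqp0 hp.le; linarith)
              simp only [Real.rpow_add' hIpnn h9, Real.rpow_one],
            Real.mul_rpow (Real.rpow_nonneg hC0pos.le _) (Real.rpow_nonneg hIpnn _),
            ← Real.rpow_mul hC0pos.le, ← Real.rpow_mul hIpnn]
          congr 2
          all_goals field_simp
          all_goals ring
  · -- sup bound
    calc trigSup T = M := rfl
      _ ≤ C0^(1/p) * Ip^(1/p) := hMbound
      _ = C0^(1/p) * trigLp T p := by rw [trigLp, ← hIp]

end
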